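/- Let G be a finite abelian p-group, M a subgroup of index p^2 containing pG, with G-levels (l, L). Then there exist elements x, y ∈ G of orders p^l and p^L respectively with G = ⟨x, y⟩ + M. -/

import Mathlib

/-- The `p^i`-torsion subgroup `G[p^i] = {x ∈ G : p^i • x = 0}`. -/
def pTors (p i : ℕ) (G : Type*) [AddCommGroup G] : AddSubgroup G where
  carrier := {x | (p ^ i) • x = 0}
  zero_mem' := by simp
  add_mem' := by
    intro a b ha hb
    simp only [Set.mem_setOf_eq, smul_add] at *
    rw [ha, hb, add_zero]
  neg_mem' := by
    intro a ha
    simp only [Set.mem_setOf_eq, smul_neg] at *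
    rw [ha, neg_zero]

/-- The lower `T`-level `ℓ_T(M) = 1 + max{ i : T[p^i] ⊆ M ∩ T }` of a subgroup `M`.
For `T = ⊤` this is the `G`-level `ℓ(M)`. -/
noncomputable def levelL (p : ℕ) {G : Type*} [AddCommGroup G] (T M : AddSubgroup G) : ℕ :=
  1 + sSup {i : ℕ | pTors p i G ⊓ T ≤ M ⊓ T}

/-- The upper `T`-level `L_T(M) = min{ j : T[p^j] + (M ∩ T) = T }` of a subgroup `M`.
For `T = ⊤` this is the `G`-level `L(M)`. -/
noncomputable def levelU (p : ℕ) {G : Type*} [AddCommGroup G] (T M : AddSubgroup G) : ℕ :=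
  sInf {j : ℕ | (pTors p j G ⊓ T) ⊔ (M ⊓ T) = T}

/-- The subgroup `pG` of `G`. -/
def pMul (p : ℕ) (G : Type*) [AddCommGroup G] : AddSubgroup G :=
  (AddMonoidHom.mk' (fun x : G => p • x) (fun a b => smul_add p a b)).range

lemma pTors_mem {p i : ℕ} {G : Type*} [AddCommGroup G] {x : G} :
    x ∈ pTors p i G ↔ p ^ i • x = 0 := Iff.rfl

lemma pTors_mono {p : ℕ} {G : Type*} [AddCommGroup G] {i j : ℕ} (h : i ≤ j) :
    pTors p i G ≤ pTors p j G := by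
  intro x hx
  rw [pTors_mem] at hx ⊢
  rw [← Nat.sub_add_cancel h, pow_add, mul_smul, hx, smul_zero]

/-- If `G = ⟨g⟩ + M` with `p • g ∈ M`, then `M.index ∣ p`. -/
lemma lemA {p : ℕ} {G : Type*} [AddCommGroup G] (M : AddSubgroup G) (g : G)
    (hg : p • g ∈ M) (h : AddSubgroup.closure {g} ⊔ M = ⊤) : M.index ∣ p := by
  let π := QuotientAddGroup.mk' M
  have hker : π.ker = M := QuotientAddGroup.ker_mk' M
  have hmap : AddSubgroup.map π (AddSubgroup.closure {g} ⊔ M) = ⊤ := by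
    rw [h]; exact AddSubgroup.map_top_of_surjective π (QuotientAddGroup.mk'_surjective M)
  have hMbot : AddSubgroup.map π M = ⊥ := (AddSubgroup.map_eq_bot_iff M).2 hker.ge
  have hcl : AddSubgroup.closure {π g} = (⊤ : AddSubgroup (G ⧸ M)) := by
    rw [← Set.image_singleton, ← AddMonoidHom.map_closure]
    rwa [AddSubgroup.map_sup, hMbot, sup_bot_eq] at hmap
  have hcard : Nat.card (G ⧸ M) = addOrderOf (π g) := by
    rw [← Nat.card_zmultiples, AddSubgroup.zmultiples_eq_closure, hcl]
    exact (AddSubgroup.card_top).symm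
  have hord : addOrderOf (π g) ∣ p := addOrderOf_dvd_of_nsmul_eq_zero <| by
    rw [← map_nsmul]
    exact (QuotientAddGroup.eq_zero_iff _).2 hg
  have : M.index = Nat.card (G ⧸ M) := rfl
  rw [this, hcard]; exact hord

/-- For `M` of index `p²` containing `pG`, with `G`-levels `(l, L)`, there exist
`x, y ∈ G` of orders `p^l`, `p^L` with `G = ⟨x, y⟩ + M`. -/
theorem stmt7 (p : ℕ) [Fact p.Prime] (G : Type*) [AddCommGroup G] [Finite G]
    (hpG : ∀ g : G, ∃ k : ℕ, p ^ k • g = 0)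
    (M : AddSubgroup G) (hM : M.index = p ^ 2) (hpGM : pMul p G ≤ M) :
    ∃ x y : G, addOrderOf x = p ^ levelL p ⊤ M ∧ addOrderOf y = p ^ levelU p ⊤ M ∧
      AddSubgroup.closure {x, y} ⊔ M = ⊤ := by
  have hp : p.Prime := Fact.out
  have hp1 : 1 < p := hp.one_lt
  have hp0 : 0 < p := hp.pos
  -- M ≠ ⊤
  have hMne : M ≠ ⊤ := by
    intro hEq
    rw [hEq, AddSubgroup.index_top] at hM
    nlinarith
  -- torsion is eventually everything
  set N := Nat.card G with hNdef
  have hNtop : pTors p N G = ⊤ := by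
    rw [eq_top_iff]
    intro g _
    rw [pTors_mem, ← addOrderOf_dvd_iff_nsmul_eq_zero]
    obtain ⟨k, hk⟩ := hpG g
    obtain ⟨m, hm, hgm⟩ := (Nat.dvd_prime_pow hp).1 (addOrderOf_dvd_of_nsmul_eq_zero hk)
    have hdvd : p ^ m ∣ N := hgm ▸ addOrderOf_dvd_natCard g
    have hN0 : 0 < N := Nat.card_pos
    have : m < N := lt_of_lt_of_le (Nat.lt_pow_self (n := m) hp1) (Nat.le_of_dvd hN0 hdvd)
    exact hgm ▸ pow_dvd_pow p this.le
  -- simplify the level definitions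
  have hLl : levelL p ⊤ M = 1 + sSup {i : ℕ | pTors p i G ≤ M} := by
    unfold levelL; simp
  have hLU : levelU p ⊤ M = sInf {j : ℕ | pTors p j G ⊔ M = ⊤} := by
    unfold levelU; simp
  set Sl : Set ℕ := {i : ℕ | pTors p i G ≤ M} with hSl
  set SU : Set ℕ := {j : ℕ | pTors p j G ⊔ M = ⊤} with hSU
  set s := sSup Sl with hs
  set L := sInf SU with hLdef
  -- facts about Sl
  have hSl0 : (0 : ℕ) ∈ Sl := by
    intro x hx
    rw [pTors_mem, pow_zero, one_smul] at hx
    rw [hx]; exact M.zero_mem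
  have hSlbdd : BddAbove Sl := by
    refine ⟨N, fun i hi => ?_⟩
    by_contra hiN
    push_neg at hiN
    exact hMne (top_le_iff.1 (hNtop ▸ (pTors_mono hiN.le).trans hi))
  have hsmem : pTors p s G ≤ M := Nat.sSup_mem ⟨0, hSl0⟩ hSlbdd
  have hsucc : ¬ pTors p (1 + s) G ≤ M := by
    intro hle
    have := le_csSup hSlbdd (hle : (1 + s) ∈ Sl)
    omega
  -- facts about SU
  have hNU : N ∈ SU := by
    show pTors p N G ⊔ M = ⊤
    rw [hNtop, top_sup_eq]
  have hLmem : pTors p L G ⊔ M = ⊤ := Nat.sInf_mem ⟨N, hNU⟩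
  have hL1 : 1 ≤ L := by
    rcases Nat.eq_zero_or_pos L with h0 | h; swap; · exact h
    exfalso
    have : pTors p 0 G ⊔ M = ⊤ := h0 ▸ hLmem
    have hbot : pTors p 0 G = ⊥ := by
      rw [eq_bot_iff]
      intro x hx
      rw [pTors_mem, pow_zero, one_smul] at hx
      simpa using hx
    rw [hbot, bot_sup_eq] at this
    exact hMne this
  have hLpred : pTors p (L - 1) G ⊔ M ≠ ⊤ := by
    intro hEq
    have h := Nat.sInf_le (show (L - 1) ∈ SU from hEq)
    rw [← hLdef] at h
    omega
  -- l ≤ L, i.e. 1 + s ≤ L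
  have hlL : 1 + s ≤ L := by
    by_contra hc
    push_neg at hc
    have hLs : L ≤ s := by omega
    have : pTors p L G ≤ M := (pTors_mono hLs).trans hsmem
    exact hMne (by rw [← hLmem, sup_eq_right.2 this])
  -- choose x
  obtain ⟨x, hxT, hxM⟩ : ∃ x, x ∈ pTors p (1 + s) G ∧ x ∉ M := by
    by_contra hc
    push_neg at hc
    exact hsucc hc
  have hordx : addOrderOf x = p ^ (1 + s) := by
    obtain ⟨m, hm, hxm⟩ := (Nat.dvd_prime_pow hp).1
      (addOrderOf_dvd_of_nsmul_eq_zero (pTors_mem.1 hxT))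
    rcases Nat.lt_or_ge m (1 + s) with hlt | hge
    · exfalso
      apply hxM
      apply hsmem
      rw [pTors_mem, ← addOrderOf_dvd_iff_nsmul_eq_zero, hxm]
      exact pow_dvd_pow p (by omega)
    · rw [hxm]; congr 1; omega
  -- the obstruction subgroup K
  set K := AddSubgroup.closure {x} ⊔ (pTors p (L - 1) G ⊔ M) with hK
  have hMK : M ≤ K := le_sup_of_le_right le_sup_right
  have hxK : x ∈ K := AddSubgroup.mem_sup_left (AddSubgroup.subset_closure rfl)
  have hKne : K ≠ ⊤ := by
    rcases Nat.lt_or_ge (1 + s) L with hlt | hge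
    · -- l ≤ L - 1, so x ∈ pTors p (L-1), K = pTors(L-1) ⊔ M
      intro hEq
      apply hLpred
      rw [eq_top_iff, ← hEq, hK]
      apply sup_le _ le_rfl
      rw [AddSubgroup.closure_le]
      intro z hz
      rcases hz with rfl
      exact AddSubgroup.mem_sup_left (pTors_mono (by omega) hxT)
    · -- l = L : pTors(L-1) ≤ M, K = ⟨x⟩ ⊔ M, use lemA
      have hLs1 : L - 1 ≤ s := by omega
      have hTm : pTors p (L - 1) G ≤ M := (pTors_mono hLs1).trans hsmem
      intro hEq
      have hK2 : AddSubgroup.closure {x} ⊔ M = ⊤ := by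
        rw [eq_top_iff, ← hEq, hK]
        exact sup_le le_sup_left (sup_le (le_sup_of_le_right hTm) le_sup_right)
      have hpx : p • x ∈ M := hpGM ⟨x, rfl⟩
      have := lemA M x hpx hK2
      rw [hM] at this
      have hle := Nat.le_of_dvd hp0 this
      have h2 : p ^ 1 < p ^ 2 := Nat.pow_lt_pow_right hp1 (by omega)
      rw [pow_one] at h2
      omega
  -- choose y
  obtain ⟨y, hyT, hyK⟩ : ∃ y, y ∈ pTors p L G ∧ y ∉ K := by
    by_contra hc
    push_neg at hc
    apply hKne
    rw [eq_top_iff, ← hLmem]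
    exact sup_le hc hMK
  have hordy : addOrderOf y = p ^ L := by
    obtain ⟨m, hm, hym⟩ := (Nat.dvd_prime_pow hp).1
      (addOrderOf_dvd_of_nsmul_eq_zero (pTors_mem.1 hyT))
    rcases Nat.lt_or_ge m L with hlt | hge
    · exfalso
      apply hyK
      rw [hK]
      apply AddSubgroup.mem_sup_right
      apply AddSubgroup.mem_sup_left
      rw [pTors_mem, ← addOrderOf_dvd_iff_nsmul_eq_zero, hym]
      exact pow_dvd_pow p (by omega)
    · rw [hym]; congr 1; omega
  -- final index computation
  refine ⟨x, y, by rw [hLl, hordx], by rw [hLU, hordy], ?_⟩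
  set J1 := AddSubgroup.closure {x} ⊔ M with hJ1
  set J := AddSubgroup.closure {x, y} ⊔ M with hJ
  have hJ1J : J1 ≤ J :=
    sup_le (le_sup_of_le_left (AddSubgroup.closure_mono (by simp))) le_sup_right
  have hJ1K : J1 ≤ K := sup_le le_sup_left (le_sup_of_le_right le_sup_right)
  have hxJ1 : x ∈ J1 := AddSubgroup.mem_sup_left (AddSubgroup.subset_closure rfl)
  have hyJ : y ∈ J := AddSubgroup.mem_sup_left (AddSubgroup.subset_closure (by simp))
  have hyJ1 : y ∉ J1 := fun h => hyK (hJ1K h)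
  -- J1.index = p
  have hidx1 : J1.index = p := by
    have hdvd : J1.index ∣ p ^ 2 := hM ▸ AddSubgroup.index_dvd_of_le le_sup_right
    have hne1 : J1.index ≠ 1 := by
      intro h1
      exact hKne (top_le_iff.1 ((AddSubgroup.index_eq_one.1 h1) ▸ hJ1K))
    obtain ⟨k, hk2, hkEq⟩ := (Nat.dvd_prime_pow hp).1 hdvd
    have hrel : M.relIndex J1 * J1.index = p ^ 2 :=
      hM ▸ AddSubgroup.relIndex_mul_index (le_sup_right : M ≤ J1)
    have hrelne1 : M.relIndex J1 ≠ 1 := by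
      intro h1
      exact hxM (AddSubgroup.relIndex_eq_one.1 h1 hxJ1)
    interval_cases k
    · rw [pow_zero] at hkEq; exact absurd hkEq hne1
    · rw [hkEq]; ring
    · exfalso
      rw [hkEq] at hrel
      have hp2 : 0 < p ^ 2 := pow_pos hp0 2
      exact hrelne1 (Nat.eq_of_mul_eq_mul_right hp2 (by rw [one_mul]; exact hrel))
  -- J.index = 1
  have hrel2 : J1.relIndex J * J.index = p := hidx1 ▸ AddSubgroup.relIndex_mul_index hJ1J
  have hrelne1 : J1.relIndex J ≠ 1 := by
    intro h1
    exact hyJ1 (AddSubgroup.relIndex_eq_one.1 h1 hyJ)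
  have hreldvd : J1.relIndex J ∣ p := ⟨J.index, hrel2.symm⟩
  have hrelp : J1.relIndex J = p :=
    (hp.eq_one_or_self_of_dvd _ hreldvd).resolve_left hrelne1
  have hJidx : J.index = 1 := by
    rw [hrelp] at hrel2
    exact Nat.eq_of_mul_eq_mul_left hp0 (by rw [mul_one]; exact hrel2)
  exact AddSubgroup.index_eq_one.1 hJidx
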